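/- Let S_1(x) = (−2−x) + (8−3x−3x²)e^x + (−14+9x−6x²−5x³)e^{2x} + (16+18x²−2x⁴)e^{3x} + (−14−9x−6x²+5x³)e^{4x} + (8+3x−3x²)e^{5x} + (−2+x)e^{6x}. Then all Taylor coefficients of S_1 at 0 are non-negative; in particular S_1(x) ≥ 0 for all x ≥ 0. -/

import Mathlib

open Real

noncomputable def S1 (x : ℝ) : ℝ :=
  (-2 - x) + (8 - 3*x - 3*x^2) * Real.exp x + (-14 + 9*x - 6*x^2 - 5*x^3) * Real.exp (2*x) +
  (16 + 18*x^2 - 2*x^4) * Real.exp (3*x) + (-14 - 9*x - 6*x^2 + 5*x^3) * Real.exp (4*x) +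
  (8 + 3*x - 3*x^2) * Real.exp (5*x) + (-2 + x) * Real.exp (6*x)

noncomputable def Ee (k : ℝ) (j n : ℕ) : ℝ :=
  if j ≤ n then k ^ (n - j) / (Nat.factorial (n - j) : ℝ) else 0

lemma hasSum_exp_real (y : ℝ) : HasSum (fun n => y ^ n / (Nat.factorial n : ℝ)) (Real.exp y) := by
  rw [Real.exp_eq_exp_ℝ]
  exact NormedSpace.expSeries_div_hasSum_exp y

lemma hasSum_Ee (k : ℝ) (j : ℕ) (x : ℝ) :
    HasSum (fun n => Ee k j n * x ^ n) (x ^ j * Real.exp (k * x)) := by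
  have h1 := (hasSum_exp_real (k * x)).mul_left (x ^ j)
  have hinj : Function.Injective (· + j : ℕ → ℕ) := add_left_injective j
  rw [← Function.Injective.hasSum_iff (f := fun n => Ee k j n * x ^ n) hinj ?_]
  · refine h1.congr_fun fun n => ?_
    simp only [Function.comp_apply, Ee, Nat.add_sub_cancel, if_pos (Nat.le_add_left j n)]
    rw [mul_pow]
    ring
  · intro m hm
    have hmj : ¬ j ≤ m := by
      intro h
      exact hm ⟨m - j, Nat.sub_add_cancel h⟩
    simp [Ee, hmj]

lemma Ee_abs (k : ℝ) (j n : ℕ) : |Ee k j n| = Ee |k| j n := by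
  unfold Ee
  split_ifs with h
  · rw [abs_div, abs_pow]
    congr 1
    rw [Nat.abs_cast]
  · simp

lemma summable_abs_Ee (c k x : ℝ) (j : ℕ) :
    Summable (fun n => |c * (Ee k j n * x ^ n)|) := by
  refine ((hasSum_Ee |k| j |x|).summable.mul_left |c|).congr fun n => ?_
  rw [abs_mul, abs_mul, Ee_abs, abs_pow]

lemma summable_abs_add {f g : ℕ → ℝ} (hf : Summable (fun n => |f n|))
    (hg : Summable (fun n => |g n|)) : Summable (fun n => |f n + g n|) :=
  Summable.of_nonneg_of_le (fun _ => abs_nonneg _) (fun _ => abs_add_le _ _) (hf.add hg)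

noncomputable def uu (n : ℕ) : ℝ :=
  (-2) * Ee (-3) 0 n + (-1) * Ee (-3) 1 n
  + 8 * Ee (-2) 0 n + (-3) * Ee (-2) 1 n + (-3) * Ee (-2) 2 n
  + (-14) * Ee (-1) 0 n + 9 * Ee (-1) 1 n + (-6) * Ee (-1) 2 n + (-5) * Ee (-1) 3 n
  + 16 * Ee 0 0 n + 18 * Ee 0 2 n + (-2) * Ee 0 4 n
  + (-14) * Ee 1 0 n + (-9) * Ee 1 1 n + (-6) * Ee 1 2 n + 5 * Ee 1 3 n
  + 8 * Ee 2 0 n + 3 * Ee 2 1 n + (-3) * Ee 2 2 n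
  + (-2) * Ee 3 0 n + 1 * Ee 3 1 n

lemma summable_uu_norm (x : ℝ) : Summable (fun n => ‖uu n * x ^ n‖) := by
  have h := (summable_abs_add (summable_abs_add (summable_abs_add (summable_abs_add (summable_abs_add (summable_abs_add (summable_abs_add (summable_abs_add (summable_abs_add (summable_abs_add (summable_abs_add (summable_abs_add (summable_abs_add (summable_abs_add (summable_abs_add (summable_abs_add (summable_abs_add (summable_abs_add (summable_abs_add (summable_abs_add (summable_abs_Ee (-2) (-3) x 0) (summable_abs_Ee (-1) (-3) x 1)) (summable_abs_Ee (8) (-2) x 0)) (summable_abs_Ee (-3) (-2) x 1)) (summable_abs_Ee (-3) (-2) x 2)) (summable_abs_Ee (-14) (-1) x 0)) (summable_abs_Ee (9) (-1) x 1)) (summable_abs_Ee (-6) (-1) x 2)) (summable_abs_Ee (-5) (-1) x 3)) (summable_abs_Ee (16) (0) x 0)) (summable_abs_Ee (18) (0) x 2)) (summable_abs_Ee (-2) (0) x 4)) (summable_abs_Ee (-14) (1) x 0)) (summable_abs_Ee (-9) (1) x 1)) (summable_abs_Ee (-6) (1) x 2)) (summable_abs_Ee (5) (1) x 3)) (summable_abs_Ee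 (8) (2) x 0)) (summable_abs_Ee (3) (2) x 1)) (summable_abs_Ee (-3) (2) x 2)) (summable_abs_Ee (-2) (3) x 0)) (summable_abs_Ee (1) (3) x 1))
  refine h.congr fun n => ?_
  rw [Real.norm_eq_abs]
  exact congrArg abs (by simp only [uu]; ring)

noncomputable def Tf (x : ℝ) : ℝ :=
  (-2 - x) * Real.exp ((-3) * x) + (8 - 3*x - 3*x^2) * Real.exp ((-2) * x)
  + (-14 + 9*x - 6*x^2 - 5*x^3) * Real.exp ((-1) * x) + (16 + 18*x^2 - 2*x^4)
  + (-14 - 9*x - 6*x^2 + 5*x^3) * Real.exp (1 * x) + (8 + 3*x - 3*x^2) * Real.exp (2 * x)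
  + (-2 + x) * Real.exp (3 * x)

lemma hasSum_T (x : ℝ) : HasSum (fun n => uu n * x ^ n) (Tf x) := by
  have h :=
    (((((((((((((((((((((hasSum_Ee (-3) 0 x).mul_left (-2)).add
      ((hasSum_Ee (-3) 1 x).mul_left (-1))).add
      ((hasSum_Ee (-2) 0 x).mul_left 8)).add
      ((hasSum_Ee (-2) 1 x).mul_left (-3))).add
      ((hasSum_Ee (-2) 2 x).mul_left (-3))).add
      ((hasSum_Ee (-1) 0 x).mul_left (-14))).add
      ((hasSum_Ee (-1) 1 x).mul_left 9)).add
      ((hasSum_Ee (-1) 2 x).mul_left (-6))).add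
      ((hasSum_Ee (-1) 3 x).mul_left (-5))).add
      ((hasSum_Ee 0 0 x).mul_left 16)).add
      ((hasSum_Ee 0 2 x).mul_left 18)).add
      ((hasSum_Ee 0 4 x).mul_left (-2))).add
      ((hasSum_Ee 1 0 x).mul_left (-14))).add
      ((hasSum_Ee 1 1 x).mul_left (-9))).add
      ((hasSum_Ee 1 2 x).mul_left (-6))).add
      ((hasSum_Ee 1 3 x).mul_left 5)).add
      ((hasSum_Ee 2 0 x).mul_left 8)).add
      ((hasSum_Ee 2 1 x).mul_left 3)).add
      ((hasSum_Ee 2 2 x).mul_left (-3))).add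
      ((hasSum_Ee 3 0 x).mul_left (-2))).add
      ((hasSum_Ee 3 1 x).mul_left 1)
  have h2 := h.congr_fun (g := fun n => uu n * x ^ n) (fun n => by simp only [uu]; ring)
  convert h2 using 1
  · rfl
  simp only [Tf, zero_mul, Real.exp_zero]
  ring

lemma S1_eq (x : ℝ) : Real.exp (3*x) * Tf x = S1 x := by
  have h1 : Real.exp (3*x) * Real.exp ((-3) * x) = 1 := by
    rw [← Real.exp_add, show 3*x + (-3)*x = 0 by ring, Real.exp_zero]
  have h2 : Real.exp (3*x) * Real.exp ((-2) * x) = Real.exp x := by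
    rw [← Real.exp_add, show 3*x + (-2)*x = x by ring]
  have h3 : Real.exp (3*x) * Real.exp ((-1) * x) = Real.exp (2*x) := by
    rw [← Real.exp_add, show 3*x + (-1)*x = 2*x by ring]
  have h5 : Real.exp (3*x) * Real.exp (1 * x) = Real.exp (4*x) := by
    rw [← Real.exp_add, show 3*x + 1*x = 4*x by ring]
  have h6 : Real.exp (3*x) * Real.exp (2 * x) = Real.exp (5*x) := by
    rw [← Real.exp_add, show 3*x + 2*x = 5*x by ring]
  have h7 : Real.exp (3*x) * Real.exp (3 * x) = Real.exp (6*x) := by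
    rw [← Real.exp_add, show 3*x + 3*x = 6*x by ring]
  simp only [Tf, S1]
  linear_combination (-2 - x) * h1 + (8 - 3*x - 3*x^2) * h2 + (-14 + 9*x - 6*x^2 - 5*x^3) * h3
    + (-14 - 9*x - 6*x^2 + 5*x^3) * h5 + (8 + 3*x - 3*x^2) * h6 + (-2 + x) * h7

noncomputable def aa (n : ℕ) : ℝ := ∑ k ∈ Finset.range (n+1), Ee 3 0 k * uu (n-k)

lemma summable_e3_norm (x : ℝ) : Summable (fun n => ‖Ee 3 0 n * x ^ n‖) := by
  refine (summable_abs_Ee 1 3 x 0).congr fun n => ?_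
  rw [Real.norm_eq_abs, one_mul]

lemma hasSum_aa (x : ℝ) : HasSum (fun n => aa n * x ^ n) (S1 x) := by
  have hf : HasSum (fun n => Ee 3 0 n * x ^ n) (Real.exp (3*x)) := by
    simpa using hasSum_Ee 3 0 x
  have h := hasSum_sum_range_mul_of_summable_norm (summable_e3_norm x) (summable_uu_norm x)
  rw [hf.tsum_eq, (hasSum_T x).tsum_eq, S1_eq] at h
  refine h.congr_fun fun n => ?_
  rw [aa, Finset.sum_mul]
  refine Finset.sum_congr rfl fun k hk => ?_
  have hkn : k ≤ n := by
    have := Finset.mem_range.mp hk; omega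
  obtain ⟨m, rfl⟩ : ∃ m, n = k + m := ⟨n - k, by omega⟩
  rw [show k + m - k = m by omega, pow_add]
  ring



noncomputable def vv (n : ℕ) : ℝ :=
  (-14) * Ee 1 0 n + (-9) * Ee 1 1 n + (-6) * Ee 1 2 n + 5 * Ee 1 3 n
  + 8 * Ee 2 0 n + 3 * Ee 2 1 n + (-3) * Ee 2 2 n
  + (-2) * Ee 3 0 n + 1 * Ee 3 1 n

lemma Ee_neg (k : ℝ) (j n : ℕ) : Ee (-k) j n = (-1) ^ n * ((-1) ^ j * Ee k j n) := by
  unfold Ee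
  split_ifs with h
  · have h2 : (n - j) + j = n := Nat.sub_add_cancel h
    have hm : (-1 : ℝ) ^ n = (-1) ^ (n - j) * (-1) ^ j := by rw [← pow_add, h2]
    have hj : (-1 : ℝ) ^ j * (-1) ^ j = 1 := by
      rw [← pow_add]; exact Even.neg_one_pow ⟨j, rfl⟩
    rw [hm, neg_pow]
    linear_combination (-((-1 : ℝ) ^ (n - j) * k ^ (n - j) / ((Nat.factorial (n - j)) : ℝ))) * hj
  · ring

lemma Ee_zero_eq (j n : ℕ) : Ee 0 j n = if n = j then 1 else 0 := by
  unfold Ee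
  rcases Nat.lt_trichotomy n j with h | h | h
  · rw [if_neg (by omega), if_neg (by omega)]
  · subst h; simp
  · rw [if_pos (by omega), if_neg (by omega)]
    rw [zero_pow (by omega)]
    simp

lemma uu_eq (n : ℕ) :
    uu n = 16 * Ee 0 0 n + 18 * Ee 0 2 n - 2 * Ee 0 4 n + (1 + (-1) ^ n) * vv n := by
  have h3 : Ee (-3) 0 n = (-1)^n * ((-1)^0 * Ee 3 0 n) := Ee_neg 3 0 n
  have h4 : Ee (-3) 1 n = (-1)^n * ((-1)^1 * Ee 3 1 n) := Ee_neg 3 1 n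
  have h5 : Ee (-2) 0 n = (-1)^n * ((-1)^0 * Ee 2 0 n) := Ee_neg 2 0 n
  have h6 : Ee (-2) 1 n = (-1)^n * ((-1)^1 * Ee 2 1 n) := Ee_neg 2 1 n
  have h7 : Ee (-2) 2 n = (-1)^n * ((-1)^2 * Ee 2 2 n) := Ee_neg 2 2 n
  have h8 : Ee (-1) 0 n = (-1)^n * ((-1)^0 * Ee 1 0 n) := Ee_neg 1 0 n
  have h9 : Ee (-1) 1 n = (-1)^n * ((-1)^1 * Ee 1 1 n) := Ee_neg 1 1 n
  have h10 : Ee (-1) 2 n = (-1)^n * ((-1)^2 * Ee 1 2 n) := Ee_neg 1 2 n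
  have h11 : Ee (-1) 3 n = (-1)^n * ((-1)^3 * Ee 1 3 n) := Ee_neg 1 3 n
  simp only [uu, vv, h3, h4, h5, h6, h7, h8, h9, h10, h11]
  ring

lemma key9 (s : ℕ) : 36 * ((s:ℝ)+5)^2 * 4^(s+4) ≤ (18*(s:ℝ)+36) * 9^(s+4) := by
  induction s with
  | zero => norm_num
  | succ s ih =>
    have hX : (0:ℝ) ≤ 9^(s+4) := by positivity
    have hY : (0:ℝ) ≤ 4^(s+4) := by positivity
    have e1 : (9:ℝ)^(s+1+4) = 9 * 9^(s+4) := by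
      rw [show s+1+4 = (s+4)+1 by omega, pow_succ]; ring
    have e2 : (4:ℝ)^(s+1+4) = 4 * 4^(s+4) := by
      rw [show s+1+4 = (s+4)+1 by omega, pow_succ]; ring
    rw [e1, e2]
    push_cast
    nlinarith [ih, hX, hY,
      mul_nonneg (mul_nonneg (Nat.cast_nonneg s : (0:ℝ) ≤ s) (Nat.cast_nonneg s)) hY,
      mul_nonneg (Nat.cast_nonneg s : (0:ℝ) ≤ s) hY,
      mul_nonneg (Nat.cast_nonneg s : (0:ℝ) ≤ s) hX]


lemma core (t F X Y : ℝ) (ht : 0 ≤ t) (hF : 0 < F) (hX : 0 ≤ X) (hY : 0 ≤ Y)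
    (hk : 36*(t+5)^2*Y ≤ (18*t+36)*X) :
    0 ≤ 16 * 0 + 18 * 0 - 2 * 0 +
      (1 + 1) *
        (-14 * (1 / ((2*t+10) * ((2*t+9) * ((2*t+8) * F)))) +
         -9 * (1 / ((2*t+9) * ((2*t+8) * F))) +
         -6 * (1 / ((2*t+8) * F)) +
         5 * (1 / F) +
         8 * (4 * Y / ((2*t+10) * ((2*t+9) * ((2*t+8) * F)))) +
         3 * (2 * Y / ((2*t+9) * ((2*t+8) * F))) +
         -3 * (Y / ((2*t+8) * F)) +
         -2 * (9 * X / ((2*t+10) * ((2*t+9) * ((2*t+8) * F)))) +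
         1 * (3 * X / ((2*t+9) * ((2*t+8) * F)))) := by
  have h10 : (0:ℝ) < 2*t+10 := by linarith
  have h9 : (0:ℝ) < 2*t+9 := by linarith
  have h8 : (0:ℝ) < 2*t+8 := by linarith
  have hD : (0:ℝ) < (2*t+10) * ((2*t+9) * ((2*t+8) * F)) := by positivity
  have q2 : ∀ A : ℝ, A / ((2*t+9) * ((2*t+8) * F))
      = ((2*t+10)*A) / ((2*t+10) * ((2*t+9) * ((2*t+8) * F))) :=
    fun A => (mul_div_mul_left A _ (ne_of_gt h10)).symm
  have q3 : ∀ A : ℝ, A / ((2*t+8) * F)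
      = ((2*t+10)*((2*t+9)*A)) / ((2*t+10) * ((2*t+9) * ((2*t+8) * F))) := by
    intro A
    rw [← mul_div_mul_left A ((2*t+8) * F) (ne_of_gt h9), ← mul_div_mul_left _ _ (ne_of_gt h10)]
  have q4 : ∀ A : ℝ, A / F
      = ((2*t+10)*((2*t+9)*((2*t+8)*A))) / ((2*t+10) * ((2*t+9) * ((2*t+8) * F))) := by
    intro A
    rw [← mul_div_mul_left A F (ne_of_gt h8), ← mul_div_mul_left _ _ (ne_of_gt h9),
      ← mul_div_mul_left _ _ (ne_of_gt h10)]
  rw [q2, q2, q2, q3, q3, q4]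
  have hN : (0:ℝ) ≤ 2*(5*(2*t+10)*(2*t+9)*(2*t+8) - 6*(2*t+10)*(2*t+9) - 9*(2*t+10) - 14
      + (32 + 6*(2*t+10) - 3*(2*t+10)*(2*t+9))*Y + (6*t+12)*X) := by
    nlinarith [hk, hY, hX, ht, mul_nonneg ht hY, mul_nonneg (mul_nonneg ht ht) hY,
      mul_nonneg (mul_nonneg ht ht) ht, mul_nonneg ht ht]
  convert div_nonneg hN hD.le using 1
  · rfl
  ring

set_option maxHeartbeats 1000000 in
lemma uu_even_large (s : ℕ) : 0 ≤ uu (2*s + 10) := by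
  have hE0 : Ee 0 0 (2*s+10) = 0 := by rw [Ee_zero_eq, if_neg (by omega)]
  have hE2 : Ee 0 2 (2*s+10) = 0 := by rw [Ee_zero_eq, if_neg (by omega)]
  have hE4 : Ee 0 4 (2*s+10) = 0 := by rw [Ee_zero_eq, if_neg (by omega)]
  have hpow : (-1:ℝ)^(2*s+10) = 1 := Even.neg_one_pow ⟨s+5, by ring⟩
  rw [uu_eq, hE0, hE2, hE4, hpow]
  have p1 : (3:ℝ)^(2*s+10) = 9 * 9^(s+4) := by
    rw [show 2*s+10 = 2*(s+4)+2 by omega, pow_add, pow_mul]; norm_num [mul_comm]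
  have p2 : (3:ℝ)^(2*s+9) = 3 * 9^(s+4) := by
    rw [show 2*s+9 = 2*(s+4)+1 by omega, pow_add, pow_mul]; norm_num [mul_comm]
  have p3 : (2:ℝ)^(2*s+10) = 4 * 4^(s+4) := by
    rw [show 2*s+10 = 2*(s+4)+2 by omega, pow_add, pow_mul]; norm_num [mul_comm]
  have p4 : (2:ℝ)^(2*s+9) = 2 * 4^(s+4) := by
    rw [show 2*s+9 = 2*(s+4)+1 by omega, pow_add, pow_mul]; norm_num [mul_comm]
  have p5 : (2:ℝ)^(2*s+8) = 4^(s+4) := by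
    rw [show 2*s+8 = 2*(s+4) by omega, pow_mul]; norm_num [mul_comm]
  have g1 : Ee 1 0 (2*s+10) = 1/((2*s+10).factorial : ℝ) := by
    rw [Ee, if_pos (by omega)]; norm_num
  have g2 : Ee 1 1 (2*s+10) = 1/((2*s+9).factorial : ℝ) := by
    rw [Ee, if_pos (by omega), show 2*s+10-1 = 2*s+9 by omega]; norm_num
  have g3 : Ee 1 2 (2*s+10) = 1/((2*s+8).factorial : ℝ) := by
    rw [Ee, if_pos (by omega), show 2*s+10-2 = 2*s+8 by omega]; norm_num
  have g4 : Ee 1 3 (2*s+10) = 1/((2*s+7).factorial : ℝ) := by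
    rw [Ee, if_pos (by omega), show 2*s+10-3 = 2*s+7 by omega]; norm_num
  have g5 : Ee 2 0 (2*s+10) = 4 * 4^(s+4)/((2*s+10).factorial : ℝ) := by
    rw [Ee, if_pos (by omega), Nat.sub_zero, p3]
  have g6 : Ee 2 1 (2*s+10) = 2 * 4^(s+4)/((2*s+9).factorial : ℝ) := by
    rw [Ee, if_pos (by omega), show 2*s+10-1 = 2*s+9 by omega, p4]
  have g7 : Ee 2 2 (2*s+10) = 4^(s+4)/((2*s+8).factorial : ℝ) := by
    rw [Ee, if_pos (by omega), show 2*s+10-2 = 2*s+8 by omega, p5]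
  have g8 : Ee 3 0 (2*s+10) = 9 * 9^(s+4)/((2*s+10).factorial : ℝ) := by
    rw [Ee, if_pos (by omega), Nat.sub_zero, p1]
  have g9 : Ee 3 1 (2*s+10) = 3 * 9^(s+4)/((2*s+9).factorial : ℝ) := by
    rw [Ee, if_pos (by omega), show 2*s+10-1 = 2*s+9 by omega, p2]
  have e10 : ((2*s+10).factorial : ℝ) = (2*(s:ℝ)+10) * ((2*s+9).factorial : ℝ) := by
    rw [show 2*s+10 = (2*s+9)+1 by omega, Nat.factorial_succ]; push_cast; ring
  have e9 : ((2*s+9).factorial : ℝ) = (2*(s:ℝ)+9) * ((2*s+8).factorial : ℝ) := by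
    rw [show 2*s+9 = (2*s+8)+1 by omega, Nat.factorial_succ]; push_cast; ring
  have e8 : ((2*s+8).factorial : ℝ) = (2*(s:ℝ)+8) * ((2*s+7).factorial : ℝ) := by
    rw [show 2*s+8 = (2*s+7)+1 by omega, Nat.factorial_succ]; push_cast; ring
  simp only [vv]
  rw [g1, g2, g3, g4, g5, g6, g7, g8, g9, e10, e9, e8]
  have hF : (0:ℝ) < ((2*s+7).factorial : ℝ) := by
    exact_mod_cast Nat.factorial_pos _
  have hs : (0:ℝ) ≤ (s:ℝ) := Nat.cast_nonneg s
  have hX : (0:ℝ) ≤ 9^(s+4) := by positivity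
  have hY : (0:ℝ) ≤ 4^(s+4) := by positivity
  have hk := key9 s
  set F := ((2*s+7).factorial : ℝ) with hFdef
  set X := (9:ℝ)^(s+4) with hXdef
  set Y := (4:ℝ)^(s+4) with hYdef
  exact core (s:ℝ) F X Y (Nat.cast_nonneg s) hF hX hY hk

lemma uu_odd {n : ℕ} (hn : Odd n) : uu n = 0 := by
  obtain ⟨m, rfl⟩ := hn
  have h1 : (-1:ℝ)^(2*m+1) = -1 := Odd.neg_one_pow ⟨m, by ring⟩
  have hE0 : Ee 0 0 (2*m+1) = 0 := by rw [Ee_zero_eq, if_neg (by omega)]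
  have hE2 : Ee 0 2 (2*m+1) = 0 := by rw [Ee_zero_eq, if_neg (by omega)]
  have hE4 : Ee 0 4 (2*m+1) = 0 := by rw [Ee_zero_eq, if_neg (by omega)]
  rw [uu_eq, h1, hE0, hE2, hE4]
  ring

lemma uu_small : uu 0 = 0 ∧ uu 2 = 0 ∧ uu 4 = 0 ∧ uu 6 = 0 ∧ uu 8 = 0 := by
  refine ⟨?_, ?_, ?_, ?_, ?_⟩ <;> norm_num [uu, Ee, Nat.factorial]

lemma uu_nonneg (n : ℕ) : 0 ≤ uu n := by
  rcases Nat.even_or_odd n with he | ho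
  · obtain ⟨m, rfl⟩ := he
    rcases lt_or_ge m 5 with hm | hm
    · interval_cases m
      · rw [show 0+0 = 0 by omega, uu_small.1]
      · rw [show 1+1 = 2 by omega, uu_small.2.1]
      · rw [show 2+2 = 4 by omega, uu_small.2.2.1]
      · rw [show 3+3 = 6 by omega, uu_small.2.2.2.1]
      · rw [show 4+4 = 8 by omega, uu_small.2.2.2.2]
    · obtain ⟨s, rfl⟩ : ∃ s, m = s + 5 := ⟨m - 5, by omega⟩
      rw [show (s+5)+(s+5) = 2*s+10 by ring]
      exact uu_even_large s
  · rw [uu_odd ho]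

lemma aa_nonneg (n : ℕ) : 0 ≤ aa n := by
  refine Finset.sum_nonneg fun k _ => mul_nonneg ?_ (uu_nonneg _)
  unfold Ee
  split_ifs
  · positivity
  · exact le_rfl

noncomputable def pS : FormalMultilinearSeries ℝ ℝ ℝ := FormalMultilinearSeries.ofScalars ℝ aa

lemma hasFPS : HasFPowerSeriesOnBall S1 pS 0 1 := by
  constructor
  · have hs : Summable fun n => ‖pS n‖ * (1:ℝ) ^ n := by
      have h := summable_norm_sum_mul_range_of_summable_norm (summable_e3_norm 1)
        (summable_uu_norm 1)
      refine h.congr fun n => ?_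
      rw [one_pow, mul_one]
      show ‖∑ k ∈ Finset.range (n+1), (Ee 3 0 k * (1:ℝ)^k) * (uu (n-k) * (1:ℝ)^(n-k))‖ = ‖pS n‖
      rw [show pS n = FormalMultilinearSeries.ofScalars ℝ aa n from rfl,
        FormalMultilinearSeries.ofScalars_norm]
      simp [aa]
    have := pS.le_radius_of_summable_norm (r := 1) (by simpa using hs)
    simpa using this
  · exact one_pos
  · intro y hy
    rw [zero_add]
    refine (hasSum_aa y).congr_fun fun n => ?_
    simp only [pS, FormalMultilinearSeries.ofScalars_apply_eq, smul_eq_mul]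

theorem S1_taylor_nonneg :
    (∀ n : ℕ, 0 ≤ iteratedDeriv n S1 0) ∧ ∀ x : ℝ, 0 ≤ x → 0 ≤ S1 x := by
  constructor
  · intro n
    have h := hasFPS.factorial_smul (1 : ℝ) n
    rw [← iteratedDeriv_eq_iteratedFDeriv] at h
    rw [← h]
    simp only [pS, FormalMultilinearSeries.ofScalars_apply_eq, one_pow, smul_eq_mul, mul_one,
      nsmul_eq_mul]
    exact mul_nonneg (Nat.cast_nonneg _) (aa_nonneg n)
  · intro x hx
    exact (hasSum_aa x).nonneg fun n => mul_nonneg (aa_nonneg n) (pow_nonneg hx n)
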